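/- Let M be a matroid with circuit collection 𝒞, let S ⊆ 𝒞 with S ∉ 𝒜₀, and let C ∈ 𝒞 be a circuit with C ∖ supp(S) ≠ ∅. Then S ∪ {C} ∉ 𝒜₀. -/

import Mathlib

open Set

namespace DM

variable {α : Type*}

/-- A circuit of a matroid: an inclusion-minimal dependent set. -/
def IsCircuit (M : Matroid α) (C : Set α) : Prop :=
  M.Dep C ∧ ∀ D, M.Dep D → D ⊆ C → D = C

/-- The collection 𝒞 of circuits of `M`. -/
def circuits (M : Matroid α) : Set (Set α) := {C | IsCircuit M C}

/-- The rank of a set: the maximal cardinality of an independent subset. -/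
noncomputable def rk (M : Matroid α) (S : Set α) : ℕ :=
  sSup {m : ℕ | ∃ I, I ⊆ S ∧ M.Indep I ∧ I.ncard = m}

/-- The nullity function n(S) = |S| - r(S). -/
noncomputable def nullity (M : Matroid α) (S : Set α) : ℕ := S.ncard - rk M S

/-- The support of a family of sets. -/
def supp (A : Set (Set α)) : Set α := ⋃₀ A

/-- The initial collection 𝒜₀ = {A ⊆ 𝒞 : |A| > n(supp A)}. -/
noncomputable def A0 (M : Matroid α) : Set (Set (Set α)) :=
  {A | A ⊆ circuits M ∧ nullity M (supp A) < A.ncard}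

/-- The operation ε. -/
def eps (X : Set (Set (Set α))) : Set (Set (Set α)) :=
  X ∪ {B | ∃ A₁ ∈ X, ∃ A₂ ∈ X, A₁ ∩ A₂ ∉ X ∧ ∃ C ∈ A₁ ∩ A₂, B = (A₁ ∪ A₂) \ {C}}

/-- The up-closure ↑X = {A ⊆ 𝒞 : ∃ A' ∈ X, A' ⊆ A} within the ground collection 𝒞. -/
def up (𝒞 : Set (Set α)) (X : Set (Set (Set α))) : Set (Set (Set α)) :=
  {A | A ⊆ 𝒞 ∧ ∃ A' ∈ X, A' ⊆ A}

/-- The increasing sequence 𝒜ᵢ with 𝒜₍ᵢ₊₁₎ = ↑ε(𝒜ᵢ). -/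
noncomputable def Ai (M : Matroid α) : ℕ → Set (Set (Set α))
  | 0 => A0 M
  | (i+1) => up (circuits M) (eps (Ai M i))

/-- 𝒜 = ⋃ᵢ 𝒜ᵢ : the collection of dependent sets of the combinatorial derived matroid δM. -/
noncomputable def derivedDep (M : Matroid α) : Set (Set (Set α)) := ⋃ i, Ai M i



lemma rk_basis' {M : Matroid α} {I X : Set α} (hX : X.Finite) (hI : M.IsBasis' I X) :
    rk M X = I.ncard := by
  have hIX : I ⊆ X := hI.subset
  refine le_antisymm (csSup_le ⟨0, ∅, empty_subset _, M.empty_indep, by simp⟩ ?_) (le_csSup ?_ ?_)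
  · rintro m ⟨J, hJX, hJind, rfl⟩
    obtain ⟨K, hK, hJK⟩ := hJind.subset_isBasis'_of_subset hJX
    have hKI : K.ncard = I.ncard := by
      rw [Set.ncard_def, hK.encard_eq_encard hI, ← Set.ncard_def]
    calc J.ncard ≤ K.ncard := Set.ncard_le_ncard hJK (hX.subset hK.subset)
      _ = I.ncard := hKI
  · refine ⟨X.ncard, ?_⟩
    rintro m ⟨J, hJX, _, rfl⟩
    exact Set.ncard_le_ncard hJX hX
  · exact ⟨I, hIX, hI.indep, rfl⟩

lemma circuit_ssubset_indep {M : Matroid α} {C D : Set α} (hC : IsCircuit M C)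
    (hD : D ⊆ C) (hne : D ≠ C) : M.Indep D := by
  by_contra hind
  exact hne (hC.2 D ⟨hind, hD.trans hC.1.subset_ground⟩ hD)

/-- The key rank inequality: r(C ∪ T) + 1 ≤ r(T) + |C \ T| for a circuit C not
contained in T. -/
lemma rk_union_circuit {M : Matroid α} (hE : M.E.Finite) {C T : Set α}
    (hC : IsCircuit M C) (hT : T ⊆ M.E) (hne : (C \ T).Nonempty) :
    rk M (C ∪ T) + 1 ≤ rk M T + (C \ T).ncard := by
  have hCE : C ⊆ M.E := hC.1.subset_ground
  have hCfin : C.Finite := hE.subset hCE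
  have hTfin : T.Finite := hE.subset hT
  have hCTfin : (C ∪ T).Finite := hCfin.union hTfin
  -- C ∩ T is a proper subset of C, hence independent
  have hCTne : C ∩ T ≠ C := by
    intro h
    obtain ⟨x, hxC, hxT⟩ := hne
    rw [← h] at hxC
    exact hxT hxC.2
  have hCTindep : M.Indep (C ∩ T) := circuit_ssubset_indep hC Set.inter_subset_left hCTne
  -- build a basis J of T containing C ∩ T, extend to a basis I of C ∪ T
  obtain ⟨J, hJ, hCTJ⟩ := hCTindep.subset_isBasis'_of_subset Set.inter_subset_right
  obtain ⟨I, hI, hJI⟩ := hJ.indep.subset_isBasis'_of_subset (hJ.subset.trans Set.subset_union_right)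
  have hIfin : I.Finite := hCTfin.subset hI.subset
  have hJfin : J.Finite := hTfin.subset hJ.subset
  -- I ∩ T = J
  have hIT : I ∩ T = J :=
    (hJ.eq_of_subset_indep (hI.indep.subset Set.inter_subset_left)
      (Set.subset_inter hJI hJ.subset) Set.inter_subset_right).symm
  -- I \ T ⊆ C
  have hITC : I \ T ⊆ C := fun x hx => by
    rcases hI.subset hx.1 with h | h
    · exact h
    · exact absurd h hx.2
  -- I ∩ C = (C ∩ T) ∪ (I \ T)
  have hIC : I ∩ C = (C ∩ T) ∪ (I \ T) := by
    ext x
    constructor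
    · rintro ⟨hxI, hxC⟩
      by_cases hxT : x ∈ T
      · exact Or.inl ⟨hxC, hxT⟩
      · exact Or.inr ⟨hxI, hxT⟩
    · rintro (⟨hxC, hxT⟩ | hx)
      · exact ⟨hJI (hCTJ ⟨hxC, hxT⟩), hxC⟩
      · exact ⟨hx.1, hITC hx⟩
  -- I ∩ C is a proper subset of C
  have hICne : I ∩ C ≠ C := fun h => hC.1.not_indep (h ▸ hI.indep.subset Set.inter_subset_left)
  have h4 : (I ∩ C).ncard + 1 ≤ C.ncard :=
    Set.ncard_lt_ncard ((Set.inter_subset_right).ssubset_of_ne hICne) hCfin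
  -- cardinality computations
  have hfinIT : (I ∩ T).Finite := hIfin.subset Set.inter_subset_left
  have hfinId : (I \ T).Finite := hIfin.subset Set.diff_subset
  have hfinCT : (C ∩ T).Finite := hCfin.subset Set.inter_subset_left
  have hfinCd : (C \ T).Finite := hCfin.subset Set.diff_subset
  have hd1 : Disjoint (I ∩ T) (I \ T) :=
    Disjoint.mono_left Set.inter_subset_right disjoint_sdiff_right
  have hd2 : Disjoint (C ∩ T) (I \ T) :=
    Disjoint.mono_left Set.inter_subset_right disjoint_sdiff_right
  have hd3 : Disjoint (C ∩ T) (C \ T) :=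
    Disjoint.mono_left Set.inter_subset_right disjoint_sdiff_right
  have e1 : (I ∩ T ∪ I \ T).ncard = (I ∩ T).ncard + (I \ T).ncard :=
    Set.ncard_union_eq hd1 hfinIT hfinId
  rw [Set.inter_union_diff, hIT] at e1
  have e2 : (I ∩ C).ncard = (C ∩ T).ncard + (I \ T).ncard := by
    rw [hIC]; exact Set.ncard_union_eq hd2 hfinCT hfinId
  have e3 : (C ∩ T ∪ C \ T).ncard = (C ∩ T).ncard + (C \ T).ncard :=
    Set.ncard_union_eq hd3 hfinCT hfinCd
  rw [Set.inter_union_diff] at e3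
  have hrk1 : rk M (C ∪ T) = I.ncard := rk_basis' hCTfin hI
  have hrk2 : rk M T = J.ncard := rk_basis' hTfin hJ
  omega



/-- if S ∉ 𝒜₀ and C is a circuit with C ∖ supp(S) ≠ ∅, then
S ∪ {C} ∉ 𝒜₀. -/
theorem insert_notin_A0 (M : Matroid α) (hE : M.E.Finite)
    (S : Set (Set α)) (hS : S ⊆ circuits M) (hS0 : S ∉ A0 M)
    (C : Set α) (hC : IsCircuit M C) (hCd : (C \ supp S).Nonempty) :
    insert C S ∉ A0 M := by
  set T := supp S with hT
  have hTE : T ⊆ M.E := fun x hx => by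
    obtain ⟨c, hcS, hxc⟩ := hx
    exact (hS hcS).1.subset_ground hxc
  have hTfin : T.Finite := hE.subset hTE
  have hCE : C ⊆ M.E := hC.1.subset_ground
  have hCfin : C.Finite := hE.subset hCE
  have hSfin : S.Finite :=
    hE.finite_subsets.subset fun c hc => (hS hc).1.subset_ground
  -- from hS0 : S.ncard ≤ nullity M T
  have hn : S.ncard ≤ nullity M T := by
    by_contra h
    exact hS0 ⟨hS, lt_of_not_ge h⟩
  rintro ⟨-, hlt⟩
  rw [show supp (insert C S) = C ∪ T from Set.sUnion_insert C S] at hlt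
  -- rank facts
  have key := rk_union_circuit hE hC hTE hCd
  obtain ⟨J, hJ⟩ := M.exists_isBasis' T
  have hrkT : rk M T ≤ T.ncard := by
    rw [rk_basis' hTfin hJ]; exact Set.ncard_le_ncard hJ.subset hTfin
  obtain ⟨I, hI⟩ := M.exists_isBasis' (C ∪ T)
  have hrkU : rk M (C ∪ T) ≤ (C ∪ T).ncard := by
    rw [rk_basis' (hCfin.union hTfin) hI]
    exact Set.ncard_le_ncard hI.subset (hCfin.union hTfin)
  -- cardinality of the union
  have hcardU : (C ∪ T).ncard = T.ncard + (C \ T).ncard := by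
    rw [Set.union_comm, ← Set.union_diff_self,
      Set.ncard_union_eq disjoint_sdiff_right hTfin (hCfin.subset Set.diff_subset)]
  -- cardinality of the inserted family
  have hins : (insert C S).ncard ≤ S.ncard + 1 := Set.ncard_insert_le C S
  have hnu1 : nullity M (C ∪ T) = (C ∪ T).ncard - rk M (C ∪ T) := rfl
  have hnu2 : nullity M T = T.ncard - rk M T := rfl
  omega

end DM
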